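/- Let p and t be real numbers. Define S_0(t) = 1 and S_n(t) = (1/n) Σ_{k=1}^{n} (−1)^{k+1} B_k(t) S_{n−k}(t) for n ≥ 1, and define G_0(p,t) = 1 and G_n(p,t) = (p/n) Σ_{k=1}^{n} (−1)^{k+1} B_k(t) G_{n−k}(p,t) for n ≥ 1. Then for every n ≥ 1, the sequence G also satisfies the recursion G_n(p,t) = (1/n) Σ_{k=1}^{n} [k(1+p) − n] S_k(t) G_{n−k}(p,t); i.e., the two recursions produce the same sequence of coefficients. -/

import Mathlib

open Finset

/-- The `k`-th Bernoulli polynomial evaluated at a real number `t`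
(generating function `u e^{tu}/(e^u - 1)`, so `B 1 t = t - 1/2`). -/
noncomputable def bern (k : ℕ) (t : ℝ) : ℝ :=
  Polynomial.aeval t (Polynomial.bernoulli k)

/-- the sequence `Gₙ` defined by the Bernoulli recursion
`Gₙ = (p/n) ∑_{k=1}^n (-1)^{k+1} Bₖ(t) G_{n-k}` also satisfies the recursion
`Gₙ = (1/n) ∑_{k=1}^n [k(1+p) - n] Sₖ(t) G_{n-k}`. -/
theorem G_satisfies_S_recursion
    (p t : ℝ)
    (S : ℕ → ℝ) (hS0 : S 0 = 1)
    (hS : ∀ n : ℕ, 1 ≤ n →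
      S n = (1 / (n : ℝ)) *
        ∑ k ∈ Finset.Icc 1 n, (-1 : ℝ) ^ (k + 1) * bern k t * S (n - k))
    (G : ℕ → ℝ) (hG0 : G 0 = 1)
    (hG : ∀ n : ℕ, 1 ≤ n →
      G n = (p / (n : ℝ)) *
        ∑ k ∈ Finset.Icc 1 n, (-1 : ℝ) ^ (k + 1) * bern k t * G (n - k)) :
    ∀ n : ℕ, 1 ≤ n →
      G n = (1 / (n : ℝ)) *
        ∑ k ∈ Finset.Icc 1 n, ((k : ℝ) * (1 + p) - (n : ℝ)) * S k * G (n - k) := by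
  intro n hn
  classical
  set b : ℕ → ℝ := fun j => (-1 : ℝ) ^ (j + 1) * bern j t with hb
  set C : ℕ → ℝ := fun m => ∑ i ∈ Finset.range (m + 1), S i * G (m - i) with hC
  have hnR : (n : ℝ) ≠ 0 := Nat.cast_ne_zero.mpr (by omega)
  -- multiplied-through recursions, valid for all m (including m = 0)
  have hSn : ∀ m : ℕ, (m : ℝ) * S m = ∑ j ∈ Finset.Icc 1 m, b j * S (m - j) := by
    intro m
    rcases Nat.eq_zero_or_pos m with h0 | h1
    · subst h0; simp
    · have hmR : (m : ℝ) ≠ 0 := Nat.cast_ne_zero.mpr (by omega)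
      rw [hS m h1]
      field_simp
      rfl
  have hGn : ∀ m : ℕ, (m : ℝ) * G m = p * ∑ j ∈ Finset.Icc 1 m, b j * G (m - j) := by
    intro m
    rcases Nat.eq_zero_or_pos m with h0 | h1
    · subst h0; simp
    · have hmR : (m : ℝ) ≠ 0 := Nat.cast_ne_zero.mpr (by omega)
      rw [hG m h1]
      field_simp
      rfl
  -- inner sum evaluation: for 1 ≤ j ≤ n
  have hinner : ∀ j : ℕ, j ∈ Finset.Icc 1 n →
      ∑ k ∈ Finset.Icc j n, S (k - j) * G (n - k) = C (n - j) := by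
    intro j hj
    rw [Finset.mem_Icc] at hj
    have : Finset.Icc j n = Finset.Ico j (n + 1) := by
      rw [Finset.Ico_add_one_right_eq_Icc]
    rw [this, Finset.sum_Ico_eq_sum_range]
    have hcard : n + 1 - j = n - j + 1 := by omega
    rw [hcard, hC]
    refine Finset.sum_congr rfl fun i hi => ?_
    rw [Finset.mem_range] at hi
    rw [show j + i - j = i by omega, show n - (j + i) = n - j - i by omega]
  -- Lemma A
  have hA : ∑ k ∈ Finset.Icc 1 n, (k : ℝ) * S k * G (n - k)
      = ∑ j ∈ Finset.Icc 1 n, b j * C (n - j) := by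
    have step1 : ∑ k ∈ Finset.Icc 1 n, (k : ℝ) * S k * G (n - k)
        = ∑ k ∈ Finset.Icc 1 n, ∑ j ∈ Finset.Icc 1 k, b j * (S (k - j) * G (n - k)) := by
      refine Finset.sum_congr rfl fun k hk => ?_
      rw [show (k : ℝ) * S k * G (n - k) = ((k : ℝ) * S k) * G (n - k) by ring,
        hSn k, Finset.sum_mul]
      refine Finset.sum_congr rfl fun j hj => by ring
    rw [step1]
    rw [Finset.sum_comm' (s' := fun j => Finset.Icc j n) (t' := Finset.Icc 1 n)
      (by intro k j; simp only [Finset.mem_Icc]; omega)]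
    refine Finset.sum_congr rfl fun j hj => ?_
    rw [← Finset.mul_sum, hinner j hj]
  -- Lemma B
  have hB : ∑ k ∈ Finset.range (n + 1), S k * (((n - k : ℕ) : ℝ) * G (n - k))
      = p * ∑ j ∈ Finset.Icc 1 n, b j * C (n - j) := by
    have step1 : ∑ k ∈ Finset.range (n + 1), S k * (((n - k : ℕ) : ℝ) * G (n - k))
        = ∑ k ∈ Finset.range (n + 1), ∑ j ∈ Finset.Icc 1 (n - k),
            p * (b j * (S k * G (n - j - k))) := by
      refine Finset.sum_congr rfl fun k hk => ?_
      rw [hGn (n - k), Finset.mul_sum, Finset.mul_sum]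
      refine Finset.sum_congr rfl fun j hj => ?_
      rw [show n - k - j = n - j - k by omega]
      ring
    rw [step1]
    rw [Finset.sum_comm' (s' := fun j => Finset.range (n - j + 1)) (t' := Finset.Icc 1 n)
      (by intro k j; simp only [Finset.mem_Icc, Finset.mem_range]; omega)]
    rw [Finset.mul_sum]
    refine Finset.sum_congr rfl fun j hj => ?_
    have : ∑ k ∈ Finset.range (n - j + 1), p * (b j * (S k * G (n - j - k)))
        = p * (b j * ∑ k ∈ Finset.range (n - j + 1), S k * G (n - j - k)) := by
      rw [Finset.mul_sum, Finset.mul_sum]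
    rw [this, hC]
  -- range split
  have hsplit : ∀ f : ℕ → ℝ,
      ∑ k ∈ Finset.range (n + 1), f k = f 0 + ∑ k ∈ Finset.Icc 1 n, f k := by
    intro f
    rw [Finset.sum_range_succ' f n]
    have : Finset.Icc 1 n = Finset.Ico 1 (n + 1) := by rw [Finset.Ico_add_one_right_eq_Icc]
    rw [this, Finset.sum_Ico_eq_sum_range]
    simp only [Nat.add_sub_cancel]
    rw [add_comm]
    congr 1
    refine Finset.sum_congr rfl fun i _ => by rw [add_comm 1 i]
  -- C n in terms of the Icc sum
  have hCn : C n = G n + ∑ k ∈ Finset.Icc 1 n, S k * G (n - k) := by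
    have hCn' : C n = ∑ i ∈ Finset.range (n + 1), S i * G (n - i) := by rw [hC]
    rw [hCn', hsplit (fun k => S k * G (n - k))]
    simp [hS0]
  -- n * C n = (1 + p) * ∑ b j C (n-j)
  have hnCn : (n : ℝ) * C n = (1 + p) * ∑ j ∈ Finset.Icc 1 n, b j * C (n - j) := by
    have e1 : (n : ℝ) * C n
        = ∑ k ∈ Finset.range (n + 1),
            ((k : ℝ) * S k * G (n - k) + S k * (((n - k : ℕ) : ℝ) * G (n - k))) := by
      rw [hC, Finset.mul_sum]
      refine Finset.sum_congr rfl fun k hk => ?_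
      rw [Finset.mem_range] at hk
      have hcast : ((n - k : ℕ) : ℝ) = (n : ℝ) - (k : ℝ) := by
        have : k ≤ n := by omega
        push_cast [this]; ring
      rw [hcast]; ring
    rw [e1, Finset.sum_add_distrib, hB]
    have e2 : ∑ k ∈ Finset.range (n + 1), (k : ℝ) * S k * G (n - k)
        = ∑ k ∈ Finset.Icc 1 n, (k : ℝ) * S k * G (n - k) := by
      rw [hsplit (fun k => (k : ℝ) * S k * G (n - k))]
      simp
    rw [e2, hA]
    ring
  -- put it together
  have hT : ∑ k ∈ Finset.Icc 1 n, ((k : ℝ) * (1 + p) - (n : ℝ)) * S k * G (n - k)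
      = (n : ℝ) * G n := by
    have e1 : ∑ k ∈ Finset.Icc 1 n, ((k : ℝ) * (1 + p) - (n : ℝ)) * S k * G (n - k)
        = (1 + p) * (∑ k ∈ Finset.Icc 1 n, (k : ℝ) * S k * G (n - k))
          - (n : ℝ) * ∑ k ∈ Finset.Icc 1 n, S k * G (n - k) := by
      rw [Finset.mul_sum, Finset.mul_sum, ← Finset.sum_sub_distrib]
      refine Finset.sum_congr rfl fun k hk => by ring
    have e2 : ∑ k ∈ Finset.Icc 1 n, S k * G (n - k) = C n - G n := by
      rw [hCn]; ring
    rw [e1, hA, e2]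
    have := hnCn
    nlinarith [hnCn]
  rw [hT]
  field_simp
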